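/- Let T be an ε-critical tournament with n vertices, and let ε, c, f > 0 satisfy ε < log_c(1-f) (with 0 < c, f < 1). Then for every vertex subset A with |A| ≥ cn and every transitive subtournament G of T with |G| ≥ f·tr(T), the set A is not complete from V(G) and A is not complete to V(G) (i.e., it is not the case that every vertex of G beats every vertex of A, nor that every vertex of A beats every vertex of G). -/

import Mathlib

/-- A tournament: irreflexive, and exactly one direction between distinct vertices. -/
def IsTournament {V : Type*} (r : V → V → Prop) : Prop :=
  (∀ v, ¬ r v v) ∧ ∀ u v : V, u ≠ v → (r u v ↔ ¬ r v u)

/-- A vertex set inducing a transitive subtournament. -/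
def TransSub {V : Type*} (r : V → V → Prop) (S : Finset V) : Prop :=
  ∀ a ∈ S, ∀ b ∈ S, ∀ c ∈ S, r a b → r b c → r a c

/-- Largest size of a transitive subtournament contained in `A`. -/
noncomputable def trOn {V : Type*} (r : V → V → Prop) (A : Finset V) : ℕ :=
  sSup {k | ∃ S ⊆ A, TransSub r S ∧ S.card = k}

/-- tr(T): largest size of a transitive subtournament. -/
noncomputable def trT (V : Type*) [Fintype V] (r : V → V → Prop) : ℕ :=
  trOn r Finset.univ

/-- ε-critical: tr(T) < |T|^ε, but every proper subtournament S has tr(S) ≥ |S|^ε. -/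
def EpsCritical (V : Type*) [Fintype V] (r : V → V → Prop) (ε : ℝ) : Prop :=
  ((trT V r : ℝ) < (Fintype.card V : ℝ) ^ ε) ∧
  ∀ A : Finset V, A ⊂ Finset.univ → ((A.card : ℝ) ^ ε ≤ (trOn r A : ℝ))

lemma trOn_bdd {V : Type*} (r : V → V → Prop) (A : Finset V) :
    BddAbove {k | ∃ S ⊆ A, TransSub r S ∧ S.card = k} := by
  refine ⟨A.card, fun k hk => ?_⟩
  obtain ⟨S, hS, _, hcard⟩ := hk
  exact hcard ▸ Finset.card_le_card hS

lemma trOn_exists {V : Type*} (r : V → V → Prop) (A : Finset V) :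
    ∃ S ⊆ A, TransSub r S ∧ S.card = trOn r A := by
  have hne : {k | ∃ S ⊆ A, TransSub r S ∧ S.card = k}.Nonempty :=
    ⟨0, ∅, Finset.empty_subset A,
      fun a ha => absurd ha (Finset.notMem_empty a), Finset.card_empty⟩
  exact Nat.sSup_mem hne (trOn_bdd r A)

lemma le_trOn {V : Type*} {r : V → V → Prop} {A S : Finset V}
    (hS : S ⊆ A) (ht : TransSub r S) : S.card ≤ trOn r A :=
  le_csSup (trOn_bdd r A) ⟨S, hS, ht, rfl⟩

lemma trans_union {V : Type*} [DecidableEq V] {r : V → V → Prop} (hT : IsTournament r)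
    {G S : Finset V} (hG : TransSub r G) (hS : TransSub r S)
    (hdir : ∀ g ∈ G, ∀ s ∈ S, r g s) (hdis : Disjoint G S) :
    TransSub r (G ∪ S) := by
  have asym : ∀ g ∈ G, ∀ s ∈ S, ¬ r s g := by
    intro g hg s hs
    have hne : g ≠ s := fun h => Finset.disjoint_left.mp hdis hg (h ▸ hs)
    exact (hT.2 g s hne).mp (hdir g hg s hs)
  intro a ha b hb c hc hab hbc
  rw [Finset.mem_union] at ha hb hc
  rcases ha with haG | haS
  · rcases hc with hcG | hcS
    · rcases hb with hbG | hbS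
      · exact hG a haG b hbG c hcG hab hbc
      · exact absurd hbc (asym c hcG b hbS)
    · exact hdir a haG c hcS
  · rcases hb with hbG | hbS
    · exact absurd hab (asym b hbG a haS)
    · rcases hc with hcG | hcS
      · exact absurd hbc (asym c hcG b hbS)
      · exact hS a haS b hbS c hcS hab hbc

lemma key {V : Type} [Fintype V] (r : V → V → Prop) (ε c f : ℝ)
    (hcrit : EpsCritical V r ε)
    (hε : 0 < ε) (hc : 0 < c) (hc1 : c < 1) (hf : 0 < f) (hf1 : f < 1)
    (hlog : ε < Real.logb c (1 - f))
    (A G : Finset V)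
    (hA : c * (Fintype.card V : ℝ) ≤ (A.card : ℝ))
    (hGcard : f * (trT V r : ℝ) ≤ (G.card : ℝ))
    (hdisj : Disjoint G A)
    (hGne : G.Nonempty)
    (hbig : ∀ S ⊆ A, TransSub r S → ∃ U : Finset V, TransSub r U ∧ U.card = G.card + S.card) :
    False := by
  obtain ⟨g, hg⟩ := hGne
  have hgA : g ∉ A := Finset.disjoint_left.mp hdisj hg
  have hAproper : A ⊂ Finset.univ :=
    Finset.ssubset_univ_iff.mpr (fun h => hgA (h ▸ Finset.mem_univ g))
  have h2 : ((A.card : ℝ)) ^ ε ≤ (trOn r A : ℝ) := hcrit.2 A hAproper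
  obtain ⟨S, hSA, hStrans, hScard⟩ := trOn_exists r A
  obtain ⟨U, hUt, hUcard⟩ := hbig S hSA hStrans
  have hle : U.card ≤ trT V r := le_trOn (Finset.subset_univ U) hUt
  have hle' : (G.card : ℝ) + (trOn r A : ℝ) ≤ (trT V r : ℝ) := by
    rw [← hScard]
    have : G.card + S.card ≤ trT V r := hUcard ▸ hle
    exact_mod_cast this
  set n : ℝ := (Fintype.card V : ℝ) with hn
  have hn0 : (0:ℝ) ≤ n := Nat.cast_nonneg _
  have hlt : (trT V r : ℝ) < n ^ ε := hcrit.1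
  have h1f : (0:ℝ) < 1 - f := by linarith
  have hcε : (1 - f) < c ^ ε := by
    have e1 : c ^ Real.logb c (1 - f) = 1 - f := Real.rpow_logb hc (ne_of_lt hc1) h1f
    have e2 : c ^ Real.logb c (1 - f) < c ^ ε :=
      Real.rpow_lt_rpow_of_exponent_gt hc hc1 hlog
    linarith
  have hAε : (c * n) ^ ε ≤ (A.card : ℝ) ^ ε :=
    Real.rpow_le_rpow (by positivity) hA hε.le
  have hmul : (c * n) ^ ε = c ^ ε * n ^ ε := Real.mul_rpow hc.le hn0
  have hnε0 : (0:ℝ) ≤ n ^ ε := Real.rpow_nonneg hn0 ε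
  have k2 : (1 - f) * n ^ ε ≤ c ^ ε * n ^ ε :=
    mul_le_mul_of_nonneg_right hcε.le hnε0
  have k1 : (1 - f) * (trT V r : ℝ) < (1 - f) * n ^ ε :=
    mul_lt_mul_of_pos_left hlt h1f
  linarith

theorem stmt1 {V : Type} [Fintype V] (r : V → V → Prop) (ε c f : ℝ)
    (hT : IsTournament r) (hcrit : EpsCritical V r ε)
    (hε : 0 < ε) (hc : 0 < c) (hc1 : c < 1) (hf : 0 < f) (hf1 : f < 1)
    (hlog : ε < Real.logb c (1 - f)) :
    ∀ A : Finset V, c * (Fintype.card V : ℝ) ≤ (A.card : ℝ) →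
    ∀ G : Finset V, TransSub r G → f * (trT V r : ℝ) ≤ (G.card : ℝ) →
      (¬ ∀ g ∈ G, ∀ a ∈ A, r g a) ∧ (¬ ∀ a ∈ A, ∀ g ∈ G, r a g) := by
  classical
  intro A hA G hGtrans hGcard
  -- V is nonempty
  have hn : 0 < Fintype.card V := by
    rcases Nat.eq_zero_or_pos (Fintype.card V) with h | h
    · exfalso
      have h1 := hcrit.1
      rw [h] at h1
      rw [Nat.cast_zero, Real.zero_rpow hε.ne'] at h1
      exact absurd h1 (Nat.cast_nonneg _).not_gt
    · exact h
  -- tr(T) ≥ 1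
  have htr1 : 1 ≤ trT V r := by
    obtain ⟨v⟩ := Fintype.card_pos_iff.mp hn
    have hsing : TransSub r ({v} : Finset V) := by
      intro a ha b hb c hc hab _
      rw [Finset.mem_singleton] at ha hb
      exact absurd (by rw [ha, hb] at hab; exact hab : r v v) (hT.1 v)
    simpa [trT] using le_trOn (Finset.subset_univ ({v} : Finset V)) hsing
  -- G is nonempty
  have hGne : G.Nonempty := by
    rw [← Finset.card_pos]
    by_contra h
    push_neg at h
    have hGc : G.card = 0 := Nat.le_zero.mp h
    rw [hGc] at hGcard
    have h1 : (1:ℝ) ≤ (trT V r : ℝ) := by exact_mod_cast htr1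
    norm_num at hGcard
    nlinarith
  constructor
  · intro hcomp
    have hdisj : Disjoint G A := by
      rw [Finset.disjoint_left]
      intro x hxG hxA
      exact hT.1 x (hcomp x hxG x hxA)
    refine key r ε c f hcrit hε hc hc1 hf hf1 hlog A G hA hGcard hdisj hGne ?_
    intro S hSA hSt
    have hdisGS : Disjoint G S := Finset.disjoint_of_subset_right hSA hdisj
    refine ⟨G ∪ S, trans_union hT hGtrans hSt (fun g hg s hs => hcomp g hg s (hSA hs)) hdisGS, ?_⟩
    exact Finset.card_union_of_disjoint hdisGS
  · intro hcomp
    have hdisj : Disjoint G A := by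
      rw [Finset.disjoint_left]
      intro x hxG hxA
      exact hT.1 x (hcomp x hxA x hxG)
    refine key r ε c f hcrit hε hc hc1 hf hf1 hlog A G hA hGcard hdisj hGne ?_
    intro S hSA hSt
    have hdisSG : Disjoint S G := (Finset.disjoint_of_subset_right hSA hdisj).symm
    refine ⟨S ∪ G, trans_union hT hSt hGtrans (fun s hs g hg => hcomp s (hSA hs) g hg) hdisSG, ?_⟩
    rw [Finset.card_union_of_disjoint hdisSG, Nat.add_comm]
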